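/- arXiv:1710.03647 — 6 statements merged into one kernel-verified Lean document; each statement's English description precedes it below -/
import Mathlib

section
/- Let Γ = (V,E,w,⟨V₀,V₁⟩) be an energy game arena and let σ₀ be a memoryless strategy for player 0. For every vertex v ∈ V, σ₀ is winning from v (i.e., winning from v with some initial credit c ∈ ℕ) if and only if every cycle reachable from v in the weighted graph G(σ₀) is nonnegative. -/
open scoped Classical
noncomputable section

/-- An energy game arena: vertices `V`, edge relation `E`, integer weights `w`,
player-0 vertices `P0` (player 1 owns the rest), every vertex has a successor. -/
structure Arena (V : Type) where
  E : V → V → Prop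
  w : V → V → ℤ
  P0 : V → Prop
  total : ∀ v, ∃ v', E v v'

variable {V : Type}

/-- `ρ` is a play (infinite path) starting at `v`. -/
def IsPlay (A : Arena V) (v : V) (ρ : ℕ → V) : Prop :=
  ρ 0 = v ∧ ∀ i, A.E (ρ i) (ρ (i + 1))

/-- A memoryless strategy for player 0. -/
def Strategy0 (A : Arena V) (σ : V → V) : Prop :=
  ∀ v, A.P0 v → A.E v (σ v)

/-- A memoryless strategy for player 1. -/
def Strategy1 (A : Arena V) (σ : V → V) : Prop :=
  ∀ v, ¬ A.P0 v → A.E v (σ v)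

/-- The play `ρ` is consistent with the player-0 strategy `σ`. -/
def Consistent0 (A : Arena V) (σ : V → V) (ρ : ℕ → V) : Prop :=
  ∀ j, A.P0 (ρ j) → ρ (j + 1) = σ (ρ j)

/-- The play `ρ` is consistent with the player-1 strategy `σ`. -/
def Consistent1 (A : Arena V) (σ : V → V) (ρ : ℕ → V) : Prop :=
  ∀ j, ¬ A.P0 (ρ j) → ρ (j + 1) = σ (ρ j)

/-- Energy level of the prefix `ρ 0 … ρ j` with initial credit `c`. -/
def energy (A : Arena V) (c : ℕ) (ρ : ℕ → V) (j : ℕ) : ℤ :=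
  (c : ℤ) + ∑ i ∈ Finset.range j, A.w (ρ i) (ρ (i + 1))

/-- The player-0 strategy `σ` is winning from `v` with initial credit `c`. -/
def WinningFrom (A : Arena V) (σ : V → V) (v : V) (c : ℕ) : Prop :=
  ∀ ρ : ℕ → V, IsPlay A v ρ → Consistent0 A σ ρ → ∀ j, 0 ≤ energy A c ρ j

/-- Winning region of player 0. -/
def W0 (A : Arena V) : Set V :=
  {v | ∃ σ : V → V, Strategy0 A σ ∧ ∃ c : ℕ, WinningFrom A σ v c}

/-- `a ⊖ b = max (0, a - b)`, with `⊤ ⊖ b = ⊤`. -/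
def osub (a : ℕ∞) (b : ℤ) : ℕ∞ :=
  a.map (fun n : ℕ => ((n : ℤ) - b).toNat)

/-- Energy progress measure. -/
def IsEPM (A : Arena V) (f : V → ℕ∞) : Prop :=
  (∀ v, A.P0 v → ∃ v', A.E v v' ∧ osub (f v') (A.w v v') ≤ f v) ∧
  (∀ v, ¬ A.P0 v → ∀ v', A.E v v' → osub (f v') (A.w v v') ≤ f v)

/-- New value at `v` computed by the lifting operator. -/
def liftVal (A : Arena V) (f : V → ℕ∞) (v : V) : ℕ∞ :=
  if A.P0 v then sInf {x : ℕ∞ | ∃ v', A.E v v' ∧ x = osub (f v') (A.w v v')}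
  else sSup {x : ℕ∞ | ∃ v', A.E v v' ∧ x = osub (f v') (A.w v v')}

/-- The lifting operator `δ(·, v)`. -/
def liftOp (A : Arena V) (f : V → ℕ∞) (v : V) : V → ℕ∞ :=
  fun u => if u = v then liftVal A f v else f u

/-- `f` violates the EPM local condition at `v`. -/
def Violates (A : Arena V) (f : V → ℕ∞) (v : V) : Prop :=
  (A.P0 v ∧ ∀ v', A.E v v' → f v < osub (f v') (A.w v v')) ∨
  (¬ A.P0 v ∧ ∃ v', A.E v v' ∧ f v < osub (f v') (A.w v v'))

/-- `M_Γ = Σ_{v∈V} max({0} ∪ {−w(v,v') : (v,v') ∈ E})`. -/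
def MGamma (A : Arena V) [Fintype V] : ℕ :=
  ∑ v : V, (Finset.univ.filter (fun v' => A.E v v')).sup (fun v' => (-(A.w v v')).toNat)

/-- Edge relation of the graph `G(σ)` obtained by restricting player-0 moves to `σ`. -/
def StratEdge (A : Arena V) (σ : V → V) (a b : V) : Prop :=
  A.E a b ∧ (A.P0 a → b = σ a)

/-- `p 0, …, p n` is a finite path for the edge relation `R`. -/
def FinPath (R : V → V → Prop) (p : ℕ → V) (n : ℕ) : Prop :=
  ∀ i < n, R (p i) (p (i + 1))

lemma weight_lb [Fintype V] (A : Arena V) (a b : V) :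
    -(((Finset.univ.sup fun ab : V × V => (-(A.w ab.1 ab.2)).toNat) : ℕ) : ℤ) ≤ A.w a b := by
  have h1 : (-(A.w a b)).toNat ≤ Finset.univ.sup fun ab : V × V => (-(A.w ab.1 ab.2)).toNat :=
    Finset.le_sup (f := fun ab : V × V => (-(A.w ab.1 ab.2)).toNat) (Finset.mem_univ (a, b))
  omega

lemma path_lb [Fintype V] (A : Arena V) (σ : V → V) (v : V)
    (hcyc : ∀ (m : ℕ) (p : ℕ → V), 1 ≤ m → p 0 = p m →
        FinPath (StratEdge A σ) p m →
        (∃ (k : ℕ) (q : ℕ → V), q 0 = v ∧ q k = p 0 ∧ FinPath (StratEdge A σ) q k) →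
        0 ≤ ∑ i ∈ Finset.range m, A.w (p i) (p (i + 1))) :
    ∀ (n : ℕ) (p : ℕ → V), p 0 = v → FinPath (StratEdge A σ) p n →
      -(((Fintype.card V * (Finset.univ.sup fun ab : V × V => (-(A.w ab.1 ab.2)).toNat)) : ℕ) : ℤ)
        ≤ ∑ i ∈ Finset.range n, A.w (p i) (p (i + 1)) := by
  intro n
  induction n using Nat.strong_induction_on with
  | _ n ih =>
    intro p hp0 hpath
    by_cases hrep : ∃ i j, i < j ∧ j ≤ n ∧ p i = p j
    · obtain ⟨i, j, hij, hjn, heq⟩ := hrep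
      set d := j - i with hd
      have hd1 : 1 ≤ d := by omega
      have hjd : j = i + d := by omega
      have heq' : p (i + d) = p i := by rw [← hjd]; exact heq.symm
      set q : ℕ → V := fun k => if k < i then p k else p (k + d) with hq
      have hq0 : q 0 = v := by
        by_cases h0 : 0 < i
        · simpa [hq, h0] using hp0
        · have hi0 : i = 0 := by omega
          simp only [hq, hi0]
          simpa [hi0] using heq'.trans (hi0 ▸ hp0)
      have hqval : ∀ k, k < i → q k = p k := by intro k hk; simp [hq, hk]
      have hqval2 : ∀ k, i ≤ k → q k = p (k + d) := by
        intro k hk; simp [hq, Nat.not_lt.mpr hk]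
      have hqsucc : ∀ k, k < i → q (k + 1) = p (k + 1) := by
        intro k hk
        by_cases h2 : k + 1 < i
        · exact hqval _ h2
        · have : k + 1 = i := by omega
          rw [hqval2 _ (by omega), this, heq']
      have hqpath : FinPath (StratEdge A σ) q (n - d) := by
        intro t ht
        by_cases h1 : t < i
        · rw [hqval _ h1, hqsucc _ h1]
          exact hpath t (by omega)
        · rw [hqval2 _ (by omega), hqval2 _ (by omega)]
          have := hpath (t + d) (by omega)
          simpa [Nat.add_right_comm t d 1] using this
      -- cycle sum nonneg
      have hC : 0 ≤ ∑ t ∈ Finset.range d, A.w (p (i + t)) (p (i + t + 1)) := by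
        have := hcyc d (fun t => p (i + t)) hd1 (by simpa using heq'.symm)
          (fun t ht => hpath (i + t) (by omega))
          ⟨i, p, hp0, rfl, fun t ht => hpath t (by omega)⟩
        simpa [add_assoc] using this
      -- sum decomposition
      have hin : i ≤ n - d := by omega
      have hsplit : ∑ t ∈ Finset.range (n - d), A.w (q t) (q (t + 1))
          = (∑ t ∈ Finset.range i, A.w (p t) (p (t + 1)))
            + ∑ t ∈ Finset.Ico i (n - d), A.w (p (t + d)) (p (t + d + 1)) := by
        rw [Finset.range_eq_Ico, ← Finset.sum_Ico_consecutive _ (Nat.zero_le i) hin,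
          ← Finset.range_eq_Ico]
        congr 1
        · exact Finset.sum_congr rfl fun t ht => by
            rw [hqval _ (Finset.mem_range.mp ht), hqsucc _ (Finset.mem_range.mp ht)]
        · exact Finset.sum_congr rfl fun t ht => by
            have hti : i ≤ t := (Finset.mem_Ico.mp ht).1
            rw [hqval2 _ hti, hqval2 _ (by omega), Nat.add_right_comm t 1 d]
      have hshift : ∑ t ∈ Finset.Ico i (n - d), A.w (p (t + d)) (p (t + d + 1))
          = ∑ t ∈ Finset.Ico j n, A.w (p t) (p (t + 1)) := by
        rw [Finset.sum_Ico_eq_sum_range, Finset.sum_Ico_eq_sum_range]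
        have h1 : n - d - i = n - j := by omega
        rw [h1]
        refine Finset.sum_congr rfl fun s hs => ?_
        have h2 : i + s + d = j + s := by omega
        rw [h2]
      have hfull : ∑ t ∈ Finset.range n, A.w (p t) (p (t + 1))
          = (∑ t ∈ Finset.range i, A.w (p t) (p (t + 1)))
            + (∑ t ∈ Finset.range d, A.w (p (i + t)) (p (i + t + 1)))
            + ∑ t ∈ Finset.Ico j n, A.w (p t) (p (t + 1)) := by
        rw [Finset.range_eq_Ico,
          ← Finset.sum_Ico_consecutive (fun t => A.w (p t) (p (t+1))) (Nat.zero_le j) hjn,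
          ← Finset.sum_Ico_consecutive (fun t => A.w (p t) (p (t+1))) (Nat.zero_le i)
            (show i ≤ j by omega), ← Finset.range_eq_Ico]
        have h2 : ∑ t ∈ Finset.Ico i j, A.w (p t) (p (t + 1))
            = ∑ t ∈ Finset.range d, A.w (p (i + t)) (p (i + t + 1)) := by
          rw [Finset.sum_Ico_eq_sum_range]
        rw [h2]
      have hsmall := ih (n - d) (by omega) q hq0 hqpath
      rw [hsplit, hshift] at hsmall
      rw [hfull]
      linarith
    · -- injective case
      push_neg at hrep
      have hinj : Function.Injective (fun t : Fin (n + 1) => p t) := by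
        intro a b hab
        by_contra hne
        rcases Nat.lt_or_ge (a : ℕ) (b : ℕ) with h | h
        · exact absurd hab (by simpa using fun h' => (hrep a b h (by omega) h').elim)
        · have hba : (b : ℕ) < (a : ℕ) := by
            rcases Nat.lt_or_ge (b : ℕ) (a : ℕ) with h' | h'
            · exact h'
            · exact absurd (Fin.ext (by omega)) hne
          exact (hrep b a hba (by omega) hab.symm).elim
      have hcard : n + 1 ≤ Fintype.card V := by
        simpa using Fintype.card_le_of_injective _ hinj
      calc -(((Fintype.card V * (Finset.univ.sup fun ab : V × V => (-(A.w ab.1 ab.2)).toNat)) : ℕ) : ℤ)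
          ≤ ∑ _t ∈ Finset.range n,
              -(((Finset.univ.sup fun ab : V × V => (-(A.w ab.1 ab.2)).toNat : ℕ)) : ℤ) := by
            rw [Finset.sum_const, Finset.card_range, nsmul_eq_mul]
            push_cast
            have h0 : (0:ℤ) ≤ ((Finset.univ.sup fun ab : V × V => (-(A.w ab.1 ab.2)).toNat : ℕ) : ℤ) :=
              Int.ofNat_nonneg _
            nlinarith [hcard]
        _ ≤ ∑ t ∈ Finset.range n, A.w (p t) (p (t + 1)) :=
            Finset.sum_le_sum fun t _ => weight_lb A _ _

/-- A memoryless player-0 strategy `σ` is winning from `v` (with some initial credit)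
iff every cycle reachable from `v` in `G(σ)` is nonnegative. -/
theorem stmt0 {V : Type} [Fintype V] [Nonempty V] (A : Arena V)
    (σ : V → V) (hσ : Strategy0 A σ) (v : V) :
    (∃ c : ℕ, WinningFrom A σ v c) ↔
      ∀ (m : ℕ) (p : ℕ → V), 1 ≤ m → p 0 = p m →
        FinPath (StratEdge A σ) p m →
        (∃ (k : ℕ) (q : ℕ → V), q 0 = v ∧ q k = p 0 ∧ FinPath (StratEdge A σ) q k) →
        0 ≤ ∑ i ∈ Finset.range m, A.w (p i) (p (i + 1)) := by
  constructor
  · rintro ⟨c, hwin⟩ m p hm hcl hcp ⟨k, q, hq0, hqk, hqp⟩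
    by_contra hneg
    push_neg at hneg
    set S : ℤ := ∑ i ∈ Finset.range m, A.w (p i) (p (i + 1)) with hS
    set ρ : ℕ → V := fun t => if t < k then q t else p ((t - k) % m) with hρ
    have hρge : ∀ t, k ≤ t → ρ t = p ((t - k) % m) := fun t ht => by
      simp [hρ, Nat.not_lt.mpr ht]
    have hρlt : ∀ t, t < k → ρ t = q t := fun t ht => by simp [hρ, ht]
    have hρk : ρ k = p 0 := by rw [hρge k le_rfl]; simp
    have hρ0 : ρ 0 = v := by
      rcases Nat.eq_zero_or_pos k with h | h
      · rw [h] at hρk hqk; rw [hρk, ← hqk, hq0]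
      · rw [hρlt 0 h, hq0]
    have hedge : ∀ s, s % m < m → StratEdge A σ (p (s % m)) (p ((s + 1) % m)) := by
      intro s hs
      by_cases h1 : s % m + 1 < m
      · have : (s + 1) % m = s % m + 1 := by
          rw [← Nat.mod_add_mod, Nat.mod_eq_of_lt h1]
        rw [this]; exact hcp _ hs
      · have h2 : s % m = m - 1 := by omega
        have h3 : (s + 1) % m = 0 := by
          rw [← Nat.mod_add_mod, h2, show m - 1 + 1 = m by omega, Nat.mod_self]
        rw [h3, hcl]
        have := hcp (s % m) hs
        rwa [show s % m + 1 = m by omega] at this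
    have hR : ∀ t, StratEdge A σ (ρ t) (ρ (t + 1)) := by
      intro t
      by_cases h1 : t + 1 < k
      · rw [hρlt t (by omega), hρlt (t + 1) h1]; exact hqp t (by omega)
      · by_cases h2 : t < k
        · have hk : t + 1 = k := by omega
          rw [hρlt t h2, hρge (t + 1) (by omega), hk]
          simp only [Nat.sub_self, Nat.zero_mod, ← hqk]
          simpa only [hk] using hqp t (by omega)
        · rw [hρge t (by omega), hρge (t + 1) (by omega)]
          have hst : t + 1 - k = (t - k) + 1 := by omega
          rw [hst]
          exact hedge (t - k) (Nat.mod_lt _ (by omega))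
    set Sq : ℤ := ∑ i ∈ Finset.range k, A.w (ρ i) (ρ (i + 1)) with hSq
    have hblock : ∀ N : ℕ, ∑ i ∈ Finset.range (k + N * m), A.w (ρ i) (ρ (i + 1))
        = Sq + (N : ℤ) * S := by
      intro N
      induction N with
      | zero => simp [hSq]
      | succ N ihN =>
        have hsplit : k + (N + 1) * m = (k + N * m) + m := by ring
        rw [hsplit, Finset.sum_range_add, ihN]
        have hbl : ∑ i ∈ Finset.range m, A.w (ρ (k + N * m + i)) (ρ (k + N * m + i + 1))
            = S := by
          rw [hS]
          refine Finset.sum_congr rfl fun t ht => ?_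
          have htm : t < m := Finset.mem_range.mp ht
          have e1 : ρ (k + N * m + t) = p t := by
            rw [hρge _ (by omega), show k + N * m + t - k = N * m + t by omega,
              show N * m + t = t + N * m by ring, Nat.add_mul_mod_self_right,
              Nat.mod_eq_of_lt htm]
          have e2 : ρ (k + N * m + t + 1) = p (t + 1) := by
            rw [hρge _ (by omega), show k + N * m + t + 1 - k = (t + 1) + N * m by omega,
              Nat.add_mul_mod_self_right]
            by_cases h1 : t + 1 < m
            · rw [Nat.mod_eq_of_lt h1]
            · rw [show t + 1 = m from by omega, Nat.mod_self, ← hcl]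
          rw [e1, e2]
        rw [hbl]; push_cast; ring
    set N : ℕ := c + Sq.natAbs + 1 with hN
    have hplay : IsPlay A v ρ := ⟨hρ0, fun i => (hR i).1⟩
    have hcons : Consistent0 A σ ρ := fun j hj => (hR j).2 hj
    have hwj := hwin ρ hplay hcons (k + N * m)
    rw [energy, hblock N] at hwj
    have hNS : (N : ℤ) * S ≤ (N : ℤ) * (-1) :=
      mul_le_mul_of_nonneg_left (by omega) (by positivity)
    have h1 : Sq ≤ (Sq.natAbs : ℤ) := Int.le_natAbs
    have h2 : ((c + Sq.natAbs + 1 : ℕ) : ℤ) = (c : ℤ) + (Sq.natAbs : ℤ) + 1 := by push_cast; ring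
    rw [hN] at hwj hNS
    linarith [hwj, hNS, h1]
  · intro hcyc
    refine ⟨Fintype.card V * (Finset.univ.sup fun ab : V × V => (-(A.w ab.1 ab.2)).toNat),
      fun ρ hplay hcons j => ?_⟩
    have hpath : FinPath (StratEdge A σ) ρ j := fun i _ => ⟨hplay.2 i, fun h => hcons i h⟩
    have hlb := path_lb A σ v hcyc j ρ hplay.1 hpath
    rw [energy]
    linarith
end
end

section
/- Energy games are memoryless determined: for every vertex v ∈ V of an energy game arena Γ = (V,E,w,⟨V₀,V₁⟩), either player 0 has a memoryless strategy σ₀ and an initial credit c ∈ ℕ such that σ₀ is winning from v with credit c, or player 1 has a memoryless strategy σ₁ such that for every initial credit c ∈ ℕ and every play from v consistent with σ₁, some prefix of the play has negative energy level. -/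
open scoped Classical
noncomputable section

variable {V : Type}

namespace EGaux

variable {V : Type}

/-- Integer-credit energy. -/
def ien (A : Arena V) (c : ℤ) (ρ : ℕ → V) (j : ℕ) : ℤ :=
  c + ∑ i ∈ Finset.range j, A.w (ρ i) (ρ (i + 1))

lemma energy_eq_ien (A : Arena V) (c : ℕ) (ρ : ℕ → V) (j : ℕ) :
    energy A c ρ j = ien A (c : ℤ) ρ j := rfl

lemma ien_zero (A : Arena V) (c : ℤ) (ρ : ℕ → V) : ien A c ρ 0 = c := by
  simp [ien]

lemma ien_succ (A : Arena V) (c : ℤ) (ρ : ℕ → V) (j : ℕ) :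
    ien A c ρ (j + 1) = ien A c ρ j + A.w (ρ j) (ρ (j + 1)) := by
  simp [ien, Finset.sum_range_succ]; ring

/-- Prepend a vertex to a play. -/
def cons (u : V) (ρ : ℕ → V) : ℕ → V := fun j => Nat.casesOn j u ρ

@[simp] lemma cons_zero (u : V) (ρ : ℕ → V) : cons u ρ 0 = u := rfl
@[simp] lemma cons_succ (u : V) (ρ : ℕ → V) (j : ℕ) : cons u ρ (j + 1) = ρ j := rfl

lemma ien_cons (A : Arena V) (c : ℤ) (u : V) (ρ : ℕ → V) (j : ℕ) :
    ien A c (cons u ρ) (j + 1) = ien A (c + A.w u (ρ 0)) ρ j := by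
  induction j with
  | zero => simp [ien_succ, ien_zero]
  | succ j ih => rw [ien_succ, ih, ien_succ]; rfl

/-- Glue a finite prefix of `ρ` (up to time `k`) with a continuation `π`. -/
def glue (k : ℕ) (ρ π : ℕ → V) : ℕ → V := fun i => if i < k then ρ i else π (i - k)

lemma glue_of_lt {k i : ℕ} (ρ π : ℕ → V) (h : i < k) : glue k ρ π i = ρ i := if_pos h

lemma glue_of_le {k i : ℕ} {ρ π : ℕ → V} (h0 : π 0 = ρ k) (h : i ≤ k) :
    glue k ρ π i = ρ i := by
  rcases lt_or_eq_of_le h with h | h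
  · exact glue_of_lt ρ π h
  · subst h; simp [glue, h0]

lemma glue_of_ge {k i : ℕ} (ρ π : ℕ → V) (h : k ≤ i) : glue k ρ π i = π (i - k) := by
  rcases lt_or_eq_of_le h with h | h
  · exact if_neg (by omega)
  · subst h; simp [glue]

lemma ien_glue (A : Arena V) (c : ℤ) {k : ℕ} {ρ π : ℕ → V} (h0 : π 0 = ρ k) (m : ℕ) :
    ien A c (glue k ρ π) (k + m) = ien A (ien A c ρ k) π m := by
  induction m with
  | zero =>
    rw [ien_zero]
    have : ∀ j, j ≤ k → ien A c (glue k ρ π) j = ien A c ρ j := by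
      intro j hj
      induction j with
      | zero => rw [ien_zero, ien_zero]
      | succ j ih =>
        rw [ien_succ, ien_succ, ih (by omega), glue_of_le h0 (by omega),
          glue_of_le h0 (by omega)]
    simpa using this k le_rfl
  | succ m ih =>
    have h1 : glue k ρ π (k + m) = π m := by rw [glue_of_ge _ _ (by omega)]; congr 1; omega
    have h2 : glue k ρ π (k + m + 1) = π (m + 1) := by
      rw [glue_of_ge _ _ (by omega)]; congr 1; omega
    have : k + (m + 1) = (k + m) + 1 := by omega
    rw [this, ien_succ, ih, ien_succ, h1, h2]

/-- Successors of a vertex, as a finset. -/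
def succs [Fintype V] (A : Arena V) (u : V) : Finset V :=
  Finset.univ.filter (fun v' => A.E u v')

lemma mem_succs [Fintype V] (A : Arena V) {u v' : V} : v' ∈ succs A u ↔ A.E u v' := by
  simp [succs]

lemma succs_nonempty [Fintype V] (A : Arena V) (u : V) : (succs A u).Nonempty := by
  obtain ⟨v', hv'⟩ := A.total u
  exact ⟨v', (mem_succs A).2 hv'⟩

/-- `n`-step value function of the energy game (minimal credit to survive `n` steps). -/
def fn [Fintype V] (A : Arena V) : ℕ → V → ℕ
  | 0, _ => 0
  | n + 1, u =>
    if A.P0 u then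
      (succs A u).inf' (succs_nonempty A u) (fun v' => ((fn A n v' : ℤ) - A.w u v').toNat)
    else
      (succs A u).sup' (succs_nonempty A u) (fun v' => ((fn A n v' : ℤ) - A.w u v').toNat)

lemma fn_mono [Fintype V] (A : Arena V) (u : V) : Monotone (fun n => fn A n u) := by
  have key : ∀ n, ∀ u : V, fn A n u ≤ fn A (n + 1) u := by
    intro n
    induction n with
    | zero => intro u; exact Nat.zero_le _
    | succ n ih =>
      intro u
      have hpt : ∀ v' ∈ succs A u,
          ((fn A n v' : ℤ) - A.w u v').toNat ≤ ((fn A (n+1) v' : ℤ) - A.w u v').toNat := by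
        intro v' _
        have := ih v'
        exact Int.toNat_le_toNat (by omega)
      by_cases h : A.P0 u
      · simp only [fn, if_pos h]
        exact Finset.le_inf' _ _ (fun b hb =>
          le_trans (Finset.inf'_le _ hb) (hpt b hb))
      · simp only [fn, if_neg h]
        exact Finset.sup'_mono_fun hpt
  exact monotone_nat_of_le_succ (fun n => key n u)

/-- The value at `u` is finite (bounded over all horizons). -/
def Bdd [Fintype V] (A : Arena V) (u : V) : Prop := ∃ c : ℕ, ∀ n, fn A n u ≤ c

/-- Integer-credit version of `WinningFrom`. -/
def W' (A : Arena V) (σ : V → V) (u : V) (c : ℤ) : Prop :=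
  ∀ ρ : ℕ → V, IsPlay A u ρ → Consistent0 A σ ρ → ∀ j, 0 ≤ ien A c ρ j

lemma winningFrom_iff_W' (A : Arena V) (σ : V → V) (u : V) (c : ℕ) :
    WinningFrom A σ u c ↔ W' A σ u (c : ℤ) := Iff.rfl

/-- Canonical play following `σ` at player-0 vertices. -/
def ext (A : Arena V) (σ : V → V) (u : V) : ℕ → V := fun n =>
  Nat.rec u (fun _ x => if A.P0 x then σ x else (A.total x).choose) n

lemma ext_isPlay (A : Arena V) {σ : V → V} (hσ : Strategy0 A σ) (u : V) :
    IsPlay A u (ext A σ u) ∧ Consistent0 A σ (ext A σ u) := by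
  refine ⟨⟨rfl, ?_⟩, ?_⟩
  · intro i
    show A.E (ext A σ u i) (if A.P0 (ext A σ u i) then _ else _)
    by_cases h : A.P0 (ext A σ u i)
    · rw [if_pos h]; exact hσ _ h
    · rw [if_neg h]; exact (A.total _).choose_spec
  · intro j hj
    show (if A.P0 (ext A σ u j) then σ (ext A σ u j) else _) = _
    rw [if_pos hj]

lemma W'_nonneg (A : Arena V) {σ : V → V} (hσ : Strategy0 A σ) {u : V} {c : ℤ}
    (h : W' A σ u c) : 0 ≤ c := by
  have := h (ext A σ u) (ext_isPlay A hσ u).1 (ext_isPlay A hσ u).2 0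
  rwa [ien_zero] at this

/-- One-step unfolding of winning. -/
lemma stepW' (A : Arena V) {σ : V → V} {u : V} {c : ℤ} (h : W' A σ u c) {v' : V}
    (he : A.E u v') (hc : A.P0 u → v' = σ u) : W' A σ v' (c + A.w u v') := by
  intro π hπ hcons j
  have hplay : IsPlay A u (cons u π) := by
    refine ⟨rfl, ?_⟩
    intro i
    cases i with
    | zero => simpa [hπ.1] using he
    | succ i => exact hπ.2 i
  have hcons' : Consistent0 A σ (cons u π) := by
    intro i hi
    cases i with
    | zero => simpa [hπ.1] using hc hi
    | succ i => exact hcons i hi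
  have := h (cons u π) hplay hcons' (j + 1)
  rwa [ien_cons, hπ.1] at this

/-- Winning transfers along consistent plays (suffix property). -/
lemma shiftW' (A : Arena V) {σ : V → V} {u : V} {c : ℤ} (h : W' A σ u c) {ρ : ℕ → V}
    (hρ : IsPlay A u ρ) (hcons : Consistent0 A σ ρ) (k : ℕ) :
    W' A σ (ρ k) (ien A c ρ k) := by
  intro π hπ hcons' j
  have h0 : π 0 = ρ k := hπ.1
  have hstart : glue k ρ π 0 = u := by
    rw [glue_of_le h0 (Nat.zero_le k)]; exact hρ.1
  have hplay : IsPlay A u (glue k ρ π) := by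
    refine ⟨hstart, ?_⟩
    intro i
    rcases lt_or_ge i k with hik2 | hik2
    · have e1 : glue k ρ π i = ρ i := glue_of_lt ρ π hik2
      have e2 : glue k ρ π (i + 1) = ρ (i + 1) := glue_of_le h0 (by omega)
      rw [e1, e2]; exact hρ.2 i
    · have e1 : glue k ρ π i = π (i - k) := glue_of_ge ρ π hik2
      have e2 : glue k ρ π (i + 1) = π ((i - k) + 1) := by
        rw [glue_of_ge ρ π (by omega)]; congr 1; omega
      rw [e1, e2]; exact hπ.2 (i - k)
  have hcons2 : Consistent0 A σ (glue k ρ π) := by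
    intro i hi
    rcases lt_or_ge i k with hik2 | hik2
    · have e1 : glue k ρ π i = ρ i := glue_of_lt ρ π hik2
      have e2 : glue k ρ π (i + 1) = ρ (i + 1) := glue_of_le h0 (by omega)
      rw [e1] at hi; rw [e1, e2]; exact hcons i hi
    · have e1 : glue k ρ π i = π (i - k) := glue_of_ge ρ π hik2
      have e2 : glue k ρ π (i + 1) = π ((i - k) + 1) := by
        rw [glue_of_ge ρ π (by omega)]; congr 1; omega
      rw [e1] at hi; rw [e1, e2]; exact hcons' (i - k) hi
  have := h (glue k ρ π) hplay hcons2 (k + j)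
  rwa [ien_glue A c h0 j] at this

end EGaux
namespace EGaux

variable {V : Type}

/-- Lemma E: a winning memoryless player-0 strategy bounds all finite-horizon values. -/
lemma lemE [Fintype V] (A : Arena V) {σ : V → V} (hσ : Strategy0 A σ) :
    ∀ n, ∀ u : V, ∀ c : ℤ, W' A σ u c → (fn A n u : ℤ) ≤ c := by
  intro n
  induction n with
  | zero => intro u c hW; simpa [fn] using W'_nonneg A hσ hW
  | succ n ih =>
    intro u c hW
    have hc0 : 0 ≤ c := W'_nonneg A hσ hW
    by_cases hp : A.P0 u
    · have he : A.E u (σ u) := hσ u hp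
      have hstep : W' A σ (σ u) (c + A.w u (σ u)) := stepW' A hW he (fun _ => rfl)
      have hih := ih (σ u) _ hstep
      have hmem : σ u ∈ succs A u := (mem_succs A).2 he
      have h1 : fn A (n + 1) u ≤ ((fn A n (σ u) : ℤ) - A.w u (σ u)).toNat := by
        simp only [fn, if_pos hp]
        exact Finset.inf'_le _ hmem
      have h2 : (fn A (n + 1) u : ℤ) ≤ (((fn A n (σ u) : ℤ) - A.w u (σ u)).toNat : ℤ) := by
        exact_mod_cast h1
      omega
    · have h1 : ∀ v' ∈ succs A u, (((fn A n v' : ℤ) - A.w u v').toNat : ℤ) ≤ c := by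
        intro v' hv'
        have he : A.E u v' := (mem_succs A).1 hv'
        have hstep : W' A σ v' (c + A.w u v') := stepW' A hW he (fun h => absurd h hp)
        have hih := ih v' _ hstep
        omega
      have h2 : fn A (n + 1) u ≤ c.toNat := by
        simp only [fn, if_neg hp]
        apply Finset.sup'_le
        intro v' hv'
        have := h1 v' hv'
        omega
      omega

lemma not_bdd_of_W' [Fintype V] (A : Arena V) {σ : V → V} (hσ : Strategy0 A σ) {u : V}
    {c : ℤ} (hW : W' A σ u c) : Bdd A u :=
  ⟨c.toNat, fun n => by have := lemE A hσ n u c hW; omega⟩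

/-- A monotone bounded sequence of naturals stabilizes. -/
lemma nat_stab (a : ℕ → ℕ) (ha : Monotone a) (c : ℕ) (hc : ∀ n, a n ≤ c) :
    ∃ N, ∀ n, N ≤ n → a n = a N := by
  by_contra h
  push_neg at h
  obtain ⟨b, hb0, hbs⟩ : ∃ b : ℕ → ℕ, b 0 = 0 ∧ ∀ k, a (b k) < a (b (k + 1)) := by
    refine ⟨fun k => Nat.rec 0 (fun _ x => (h x).choose) k, rfl, ?_⟩
    intro k
    obtain ⟨hle, hne⟩ := (h (Nat.rec 0 (fun _ x => (h x).choose) k)).choose_spec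
    exact lt_of_le_of_ne (ha hle) (Ne.symm hne)
  have key : ∀ k, k ≤ a (b k) := by
    intro k
    induction k with
    | zero => omega
    | succ k ih => have := hbs k; omega
  have := key (c + 1)
  have := hc (b (c + 1))
  omega

/-- Claim A: player 0 wins (with one uniform memoryless strategy) from every
vertex with bounded value. -/
lemma claimA [Fintype V] (A : Arena V) :
    ∃ σ : V → V, Strategy0 A σ ∧ ∀ u, Bdd A u → ∃ c : ℕ, WinningFrom A σ u c := by
  classical
  -- uniform stabilization level for bounded vertices
  have hstabex : ∀ u : V, ∃ N, Bdd A u → ∀ n, N ≤ n → fn A n u = fn A N u := by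
    intro u
    by_cases hb : Bdd A u
    · obtain ⟨c, hc⟩ := hb
      obtain ⟨N, hN⟩ := nat_stab (fun n => fn A n u) (fn_mono A u) c hc
      exact ⟨N, fun _ => hN⟩
    · exact ⟨0, fun h => absurd h hb⟩
  choose Nf hNf using hstabex
  set N₀ : ℕ := Finset.univ.sup Nf with hN₀
  have hstable : ∀ u, Bdd A u → ∀ n, N₀ ≤ n → fn A n u = fn A N₀ u := by
    intro u hb n hn
    have h1 : Nf u ≤ N₀ := Finset.le_sup (Finset.mem_univ u)
    rw [hNf u hb n (by omega), hNf u hb N₀ (by omega)]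
  set gmax : ℕ := Finset.univ.sup (fun u => if Bdd A u then fn A N₀ u else 0) with hgmax
  have hg_le : ∀ u, Bdd A u → fn A N₀ u ≤ gmax := by
    intro u hb
    have h1 : (if Bdd A u then fn A N₀ u else 0) ≤ gmax :=
      Finset.le_sup (f := fun u => if Bdd A u then fn A N₀ u else 0) (Finset.mem_univ u)
    rwa [if_pos hb] at h1
  set W : ℕ := Finset.univ.sup (fun p : V × V => (A.w p.1 p.2).natAbs) with hWdef
  have hW : ∀ u v', (A.w u v').natAbs ≤ W :=
    fun u v' => Finset.le_sup (f := fun p : V × V => (A.w p.1 p.2).natAbs)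
      (Finset.mem_univ (u, v'))
  set K : ℕ := gmax + W + 1 with hKdef
  have hMex : ∀ u : V, ∃ M, ¬ Bdd A u → ∀ n, M ≤ n → K ≤ fn A n u := by
    intro u
    by_cases hb : Bdd A u
    · exact ⟨0, fun h => absurd hb h⟩
    · have : ∀ c : ℕ, ∃ n, c < fn A n u := by
        intro c
        by_contra hcon
        push_neg at hcon
        exact hb ⟨c, hcon⟩
      obtain ⟨n, hn⟩ := this K
      refine ⟨n, fun _ m hm => ?_⟩
      have h2 : fn A n u ≤ fn A m u := fn_mono A u hm
      omega
  choose Mf hMf using hMex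
  set n₁ : ℕ := max N₀ (Finset.univ.sup Mf) with hn₁
  have hn₁N₀ : N₀ ≤ n₁ := le_max_left _ _
  have hK : ∀ u, ¬ Bdd A u → K ≤ fn A n₁ u := by
    intro u hb
    have h1 : Mf u ≤ n₁ := le_trans (Finset.le_sup (Finset.mem_univ u)) (le_max_right _ _)
    exact hMf u hb n₁ h1
  have hstab1 : ∀ u, Bdd A u → fn A (n₁ + 1) u = fn A N₀ u :=
    fun u hb => hstable u hb (n₁ + 1) (by omega)
  -- the key local consequence
  have key : ∀ u v', Bdd A u → v' ∈ succs A u →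
      ((fn A n₁ v' : ℤ) - A.w u v').toNat ≤ fn A (n₁ + 1) u →
      Bdd A v' ∧ (fn A N₀ v' : ℤ) ≤ (fn A N₀ u : ℤ) + A.w u v' := by
    intro u v' hbu hv' hle
    have h1 : fn A (n₁ + 1) u = fn A N₀ u := hstab1 u hbu
    have h2 : fn A N₀ u ≤ gmax := hg_le u hbu
    have h3 : (A.w u v').natAbs ≤ W := hW u v'
    by_cases hbv : Bdd A v'
    · have h4 : fn A n₁ v' = fn A N₀ v' := hstable v' hbv n₁ (by omega)
      refine ⟨hbv, ?_⟩
      rw [h4] at hle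
      omega
    · have h5 : K ≤ fn A n₁ v' := hK v' hbv
      exfalso
      omega
  -- construct the strategy
  have hσex : ∀ u : V, ∃ v', A.E u v' ∧ (A.P0 u → Bdd A u →
      ((fn A n₁ v' : ℤ) - A.w u v').toNat = fn A (n₁ + 1) u) := by
    intro u
    by_cases h : A.P0 u ∧ Bdd A u
    · obtain ⟨v', hmem, heq⟩ := Finset.exists_mem_eq_inf' (succs_nonempty A u)
        (fun v' => ((fn A n₁ v' : ℤ) - A.w u v').toNat)
      refine ⟨v', (mem_succs A).1 hmem, fun _ _ => ?_⟩
      have : fn A (n₁ + 1) u = (succs A u).inf' (succs_nonempty A u)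
          (fun v' => ((fn A n₁ v' : ℤ) - A.w u v').toNat) := by
        simp only [fn, if_pos h.1]
      rw [this, heq]
    · obtain ⟨v', hv'⟩ := A.total u
      exact ⟨v', hv', fun hp hb => absurd ⟨hp, hb⟩ h⟩
  choose σ hσE hσopt using hσex
  refine ⟨σ, fun u hp => hσE u, ?_⟩
  intro u₀ hu₀
  refine ⟨fn A N₀ u₀, ?_⟩
  rw [winningFrom_iff_W']
  intro ρ hρ hcons j
  have inv : ∀ j, Bdd A (ρ j) ∧ (fn A N₀ (ρ j) : ℤ) ≤ ien A (fn A N₀ u₀ : ℤ) ρ j := by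
    intro j
    induction j with
    | zero => rw [hρ.1, ien_zero]; exact ⟨hu₀, le_refl _⟩
    | succ j ih =>
      obtain ⟨hbj, hlej⟩ := ih
      by_cases hp : A.P0 (ρ j)
      · have hcj : ρ (j + 1) = σ (ρ j) := hcons j hp
        have hopt := hσopt (ρ j) hp hbj
        have hmem : σ (ρ j) ∈ succs A (ρ j) := (mem_succs A).2 (hσE (ρ j))
        have hkey := key (ρ j) (σ (ρ j)) hbj hmem (le_of_eq hopt)
        have h2 := hkey.2
        rw [← hcj] at h2
        refine ⟨by rw [hcj]; exact hkey.1, ?_⟩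
        rw [ien_succ]
        omega
      · have hmem : ρ (j + 1) ∈ succs A (ρ j) := (mem_succs A).2 (hρ.2 j)
        have hle : ((fn A n₁ (ρ (j + 1)) : ℤ) - A.w (ρ j) (ρ (j + 1))).toNat
            ≤ fn A (n₁ + 1) (ρ j) := by
          simp only [fn, if_neg hp]
          exact Finset.le_sup' (fun v' => ((fn A n₁ v' : ℤ) - A.w (ρ j) v').toNat) hmem
        have hkey := key (ρ j) (ρ (j + 1)) hbj hmem hle
        have h2 := hkey.2
        refine ⟨hkey.1, ?_⟩
        rw [ien_succ]
        omega
  have := (inv j).2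
  have hpos : (0 : ℤ) ≤ (fn A N₀ (ρ j) : ℤ) := by positivity
  omega

end EGaux
namespace EGaux

variable {V : Type}

/-- Restrict the outgoing edges of `u₀` to a nonempty set `T` of successors. -/
def restrict (A : Arena V) (u₀ : V) (T : Finset V) (hT : T.Nonempty)
    (hsub : ∀ v' ∈ T, A.E u₀ v') : Arena V where
  E u v := if u = u₀ then v ∈ T else A.E u v
  w := A.w
  P0 := A.P0
  total u := by
    by_cases h : u = u₀
    · refine ⟨hT.choose, ?_⟩
      show (if u = u₀ then hT.choose ∈ T else A.E u hT.choose)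
      rw [if_pos h]; exact hT.choose_spec
    · obtain ⟨v', hv'⟩ := A.total u
      refine ⟨v', ?_⟩
      show (if u = u₀ then v' ∈ T else A.E u v')
      rw [if_neg h]; exact hv'

lemma restrict_E_ne (A : Arena V) {u₀ : V} {T : Finset V} {hT} {hsub} {u v : V}
    (h : u ≠ u₀) : (restrict A u₀ T hT hsub).E u v ↔ A.E u v := by
  show (if u = u₀ then v ∈ T else A.E u v) ↔ A.E u v
  rw [if_neg h]

lemma restrict_E_star (A : Arena V) {u₀ : V} {T : Finset V} {hT} {hsub} {v : V} :
    (restrict A u₀ T hT hsub).E u₀ v ↔ v ∈ T := by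
  show (if u₀ = u₀ then v ∈ T else A.E u₀ v) ↔ v ∈ T
  rw [if_pos rfl]

lemma restrict_E_sub (A : Arena V) {u₀ : V} {T : Finset V} {hT} {hsub} {u v : V}
    (h : (restrict A u₀ T hT hsub).E u v) : A.E u v := by
  by_cases hu : u = u₀
  · subst hu; exact hsub v ((restrict_E_star A).1 h)
  · exact (restrict_E_ne A hu).1 h

@[simp] lemma restrict_w (A : Arena V) (u₀ : V) (T : Finset V) (hT) (hsub) :
    (restrict A u₀ T hT hsub).w = A.w := rfl

@[simp] lemma restrict_P0 (A : Arena V) (u₀ : V) (T : Finset V) (hT) (hsub) :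
    (restrict A u₀ T hT hsub).P0 = A.P0 := rfl

/-- Gluing a consistent finite prefix with a consistent continuation: play property. -/
lemma glue_isPlay (B : Arena V) {k : ℕ} {v : V} {ρ π : ℕ → V}
    (hρ0 : ρ 0 = v) (hpre : ∀ i, i < k → B.E (ρ i) (ρ (i + 1)))
    (hπ : IsPlay B (ρ k) π) : IsPlay B v (glue k ρ π) := by
  have h0 : π 0 = ρ k := hπ.1
  refine ⟨by rw [glue_of_le h0 (Nat.zero_le k)]; exact hρ0, ?_⟩
  intro i
  rcases lt_or_ge i k with hik | hik
  · have e1 : glue k ρ π i = ρ i := glue_of_lt ρ π hik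
    have e2 : glue k ρ π (i + 1) = ρ (i + 1) := glue_of_le h0 (by omega)
    rw [e1, e2]; exact hpre i hik
  · have e1 : glue k ρ π i = π (i - k) := glue_of_ge ρ π hik
    have e2 : glue k ρ π (i + 1) = π ((i - k) + 1) := by
      rw [glue_of_ge ρ π (by omega)]; congr 1; omega
    rw [e1, e2]; exact hπ.2 (i - k)

lemma glue_consistent0 (B : Arena V) {k : ℕ} {σ : V → V} {ρ π : ℕ → V}
    (h0 : π 0 = ρ k) (hpre : ∀ i, i < k → B.P0 (ρ i) → ρ (i + 1) = σ (ρ i))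
    (hπ : Consistent0 B σ π) : Consistent0 B σ (glue k ρ π) := by
  intro i hi
  rcases lt_or_ge i k with hik | hik
  · have e1 : glue k ρ π i = ρ i := glue_of_lt ρ π hik
    have e2 : glue k ρ π (i + 1) = ρ (i + 1) := glue_of_le h0 (by omega)
    rw [e1] at hi; rw [e1, e2]; exact hpre i hik hi
  · have e1 : glue k ρ π i = π (i - k) := glue_of_ge ρ π hik
    have e2 : glue k ρ π (i + 1) = π ((i - k) + 1) := by
      rw [glue_of_ge ρ π (by omega)]; congr 1; omega
    rw [e1] at hi; rw [e1, e2]; exact hπ (i - k) hi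

/-- The switching lemma: combining a player-0 winning strategy of the left
restriction (from `u`) and one of the right restriction (from `u₀`) bounds the
finite-horizon values of the full game. -/
lemma lemS [Fintype V] (A AL AR : Arena V) (u₀ t₀ : V) (hstar : ¬ A.P0 u₀)
    (hwL : AL.w = A.w) (hwR : AR.w = A.w) (hpL : AL.P0 = A.P0) (hpR : AR.P0 = A.P0)
    (hEL : ∀ u v, u ≠ u₀ → (AL.E u v ↔ A.E u v))
    (hER : ∀ u v, u ≠ u₀ → (AR.E u v ↔ A.E u v))
    (hELstar : ∀ v, AL.E u₀ v ↔ v = t₀)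
    (hERstar : ∀ v, AR.E u₀ v ↔ (A.E u₀ v ∧ v ≠ t₀))
    {σL σR : V → V} (hσL : Strategy0 AL σL) (hσR : Strategy0 AR σR) :
    ∀ n (u : V) (a b : ℤ),
      (W' AL σL u a → W' AR σR u₀ b → (fn A n u : ℤ) ≤ a + b) ∧
      (W' AR σR u b → W' AL σL u₀ a → (fn A n u : ℤ) ≤ a + b) := by
  intro n
  induction n with
  | zero =>
    intro u a b
    constructor
    · intro h1 h2
      have := W'_nonneg AL hσL h1
      have := W'_nonneg AR hσR h2
      simp only [fn, Nat.cast_zero]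
      omega
    · intro h1 h2
      have := W'_nonneg AR hσR h1
      have := W'_nonneg AL hσL h2
      simp only [fn, Nat.cast_zero]
      omega
  | succ n ih =>
    intro u a b
    have hcast : ∀ (x : ℕ) (z : ℤ), (x : ℤ) ≤ z → ∀ w : ℤ,
        (((x : ℤ) - w).toNat : ℤ) ≤ z - w + max 0 (w - z) := by intro x z h w; omega
    constructor
    · intro hL hR
      have ha0 : 0 ≤ a := W'_nonneg AL hσL hL
      have hb0 : 0 ≤ b := W'_nonneg AR hσR hR
      by_cases hp : A.P0 u
      · have hne : u ≠ u₀ := fun h => hstar (h ▸ hp)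
        have hpL' : AL.P0 u := by rw [hpL]; exact hp
        have he : AL.E u (σL u) := hσL u hpL'
        have heA : A.E u (σL u) := (hEL u _ hne).1 he
        have hstep : W' AL σL (σL u) (a + AL.w u (σL u)) := stepW' AL hL he (fun _ => rfl)
        rw [hwL] at hstep
        have hih := (ih (σL u) (a + A.w u (σL u)) b).1 hstep hR
        have hmem : σL u ∈ succs A u := (mem_succs A).2 heA
        have h1 : fn A (n + 1) u ≤ ((fn A n (σL u) : ℤ) - A.w u (σL u)).toNat := by
          simp only [fn, if_pos hp]
          exact Finset.inf'_le _ hmem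
        have h2 : (fn A (n + 1) u : ℤ) ≤ (((fn A n (σL u) : ℤ) - A.w u (σL u)).toNat : ℤ) := by
          exact_mod_cast h1
        omega
      · have ha0 : 0 ≤ a := W'_nonneg AL hσL hL
        have hb0 : 0 ≤ b := W'_nonneg AR hσR hR
        have hsup : ∀ v' ∈ succs A u, (((fn A n v' : ℤ) - A.w u v').toNat : ℤ) ≤ a + b := by
          intro v' hv'
          have heA : A.E u v' := (mem_succs A).1 hv'
          by_cases hu : u = u₀
          · subst hu
            by_cases hv : v' = t₀
            · have heL : AL.E u v' := (hELstar v').2 hv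
              have hstep : W' AL σL v' (a + AL.w u v') :=
                stepW' AL hL heL (fun h => absurd (by rwa [hpL] at h) hstar)
              rw [hwL] at hstep
              have hih := (ih v' (a + A.w u v') b).1 hstep hR
              omega
            · have heR : AR.E u v' := (hERstar v').2 ⟨heA, hv⟩
              have hstep : W' AR σR v' (b + AR.w u v') :=
                stepW' AR hR heR (fun h => absurd (by rwa [hpR] at h) hstar)
              rw [hwR] at hstep
              have hih := (ih v' a (b + A.w u v')).2 hstep hL
              omega
          · have heL : AL.E u v' := (hEL u v' hu).2 heA
            have hstep : W' AL σL v' (a + AL.w u v') :=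
              stepW' AL hL heL (fun h => absurd (by rwa [hpL] at h) hp)
            rw [hwL] at hstep
            have hih := (ih v' (a + A.w u v') b).1 hstep hR
            omega
        have h2 : fn A (n + 1) u ≤ (a + b).toNat := by
          simp only [fn, if_neg hp]
          apply Finset.sup'_le
          intro v' hv'
          have := hsup v' hv'
          omega
        omega
    · intro hR hL
      have ha0 : 0 ≤ a := W'_nonneg AL hσL hL
      have hb0 : 0 ≤ b := W'_nonneg AR hσR hR
      by_cases hp : A.P0 u
      · have hne : u ≠ u₀ := fun h => hstar (h ▸ hp)
        have hpR' : AR.P0 u := by rw [hpR]; exact hp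
        have he : AR.E u (σR u) := hσR u hpR'
        have heA : A.E u (σR u) := (hER u _ hne).1 he
        have hstep : W' AR σR (σR u) (b + AR.w u (σR u)) := stepW' AR hR he (fun _ => rfl)
        rw [hwR] at hstep
        have hih := (ih (σR u) a (b + A.w u (σR u))).2 hstep hL
        have hmem : σR u ∈ succs A u := (mem_succs A).2 heA
        have h1 : fn A (n + 1) u ≤ ((fn A n (σR u) : ℤ) - A.w u (σR u)).toNat := by
          simp only [fn, if_pos hp]
          exact Finset.inf'_le _ hmem
        have h2 : (fn A (n + 1) u : ℤ) ≤ (((fn A n (σR u) : ℤ) - A.w u (σR u)).toNat : ℤ) := by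
          exact_mod_cast h1
        omega
      · have ha0 : 0 ≤ a := W'_nonneg AL hσL hL
        have hb0 : 0 ≤ b := W'_nonneg AR hσR hR
        have hsup : ∀ v' ∈ succs A u, (((fn A n v' : ℤ) - A.w u v').toNat : ℤ) ≤ a + b := by
          intro v' hv'
          have heA : A.E u v' := (mem_succs A).1 hv'
          by_cases hu : u = u₀
          · subst hu
            by_cases hv : v' = t₀
            · have heL : AL.E u v' := (hELstar v').2 hv
              have hstep : W' AL σL v' (a + AL.w u v') :=
                stepW' AL hL heL (fun h => absurd (by rwa [hpL] at h) hstar)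
              rw [hwL] at hstep
              have hih := (ih v' (a + A.w u v') b).1 hstep hR
              omega
            · have heR : AR.E u v' := (hERstar v').2 ⟨heA, hv⟩
              have hstep : W' AR σR v' (b + AR.w u v') :=
                stepW' AR hR heR (fun h => absurd (by rwa [hpR] at h) hstar)
              rw [hwR] at hstep
              have hih := (ih v' a (b + A.w u v')).2 hstep hL
              omega
          · have heR : AR.E u v' := (hER u v' hu).2 heA
            have hstep : W' AR σR v' (b + AR.w u v') :=
              stepW' AR hR heR (fun h => absurd (by rwa [hpR] at h) hp)
            rw [hwR] at hstep
            have hih := (ih v' a (b + A.w u v')).2 hstep hL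
            omega
        have h2 : fn A (n + 1) u ≤ (a + b).toNat := by
          simp only [fn, if_neg hp]
          apply Finset.sup'_le
          intro v' hv'
          have := hsup v' hv'
          omega
        omega

end EGaux
namespace EGaux

variable {V : Type}

/-- Number of player-1 edges: the induction measure. -/
def pmeasure [Fintype V] (A : Arena V) : ℕ :=
  (Finset.univ.filter (fun p : V × V => A.E p.1 p.2 ∧ ¬ A.P0 p.1)).card

/-- Lemma D: if player 0's value at `v` is unbounded, player 1 has a memoryless
strategy defeating every initial credit. -/
lemma lemD [Fintype V] : ∀ (m : ℕ) (A : Arena V), pmeasure A ≤ m → ∀ v : V, ¬ Bdd A v →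
    ∃ τ : V → V, Strategy1 A τ ∧ ∀ (c : ℕ) (ρ : ℕ → V), IsPlay A v ρ →
      Consistent1 A τ ρ → ∃ j, ien A (c : ℤ) ρ j < 0 := by
  intro m
  induction m using Nat.strong_induction_on with
  | _ m IH =>
  intro A hm v hv
  by_cases hex : ∃ u₀, ¬ A.P0 u₀ ∧ 2 ≤ (succs A u₀).card
  · -- inductive step: some player-1 vertex has at least two successors
    obtain ⟨u₀, hstar, hcard⟩ := hex
    obtain ⟨t₀, ht₀mem⟩ := succs_nonempty A u₀
    have ht₀sub : {t₀} ⊆ succs A u₀ := Finset.singleton_subset_iff.2 ht₀mem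
    have hTRne : (succs A u₀ \ {t₀}).Nonempty := by
      rw [← Finset.card_pos, Finset.card_sdiff_of_subset ht₀sub, Finset.card_singleton]
      omega
    set AL := restrict A u₀ {t₀} (Finset.singleton_nonempty t₀)
      (fun v' hv' => by rw [Finset.mem_singleton] at hv'; subst hv'; exact (mem_succs A).1 ht₀mem)
      with hALdef
    set AR := restrict A u₀ (succs A u₀ \ {t₀}) hTRne
      (fun v' hv' => (mem_succs A).1 (Finset.mem_sdiff.1 hv').1) with hARdef
    have hELstar : ∀ v', AL.E u₀ v' ↔ v' = t₀ := fun v' => by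
      rw [hALdef, restrict_E_star, Finset.mem_singleton]
    have hERstar : ∀ v', AR.E u₀ v' ↔ (A.E u₀ v' ∧ v' ≠ t₀) := fun v' => by
      rw [hARdef, restrict_E_star, Finset.mem_sdiff, Finset.mem_singleton, mem_succs]
    have hELne : ∀ u v', u ≠ u₀ → (AL.E u v' ↔ A.E u v') := fun u v' h => restrict_E_ne A h
    have hERne : ∀ u v', u ≠ u₀ → (AR.E u v' ↔ A.E u v') := fun u v' h => restrict_E_ne A h
    -- measure decrease
    have hmL : pmeasure AL < pmeasure A := by
      apply Finset.card_lt_card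
      rw [Finset.ssubset_iff_of_subset]
      · obtain ⟨r, hr⟩ := hTRne
        have hrmem := Finset.mem_sdiff.1 hr
        refine ⟨(u₀, r), ?_, ?_⟩
        · simp only [Finset.mem_filter, Finset.mem_univ, true_and]
          exact ⟨(mem_succs A).1 hrmem.1, hstar⟩
        · simp only [Finset.mem_filter, Finset.mem_univ, true_and, not_and]
          intro hEr
          have : r = t₀ := (hELstar r).1 hEr
          exact absurd (Finset.mem_singleton.2 this) hrmem.2
      · intro p hp
        simp only [Finset.mem_filter, Finset.mem_univ, true_and] at hp ⊢
        exact ⟨restrict_E_sub A hp.1, hp.2⟩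
    have hmR : pmeasure AR < pmeasure A := by
      apply Finset.card_lt_card
      rw [Finset.ssubset_iff_of_subset]
      · refine ⟨(u₀, t₀), ?_, ?_⟩
        · simp only [Finset.mem_filter, Finset.mem_univ, true_and]
          exact ⟨(mem_succs A).1 ht₀mem, hstar⟩
        · simp only [Finset.mem_filter, Finset.mem_univ, true_and, not_and]
          intro hEr
          exact absurd rfl ((hERstar t₀).1 hEr).2
      · intro p hp
        simp only [Finset.mem_filter, Finset.mem_univ, true_and] at hp ⊢
        exact ⟨restrict_E_sub A hp.1, hp.2⟩
    by_cases hBL : Bdd AL v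
    · by_cases hBR : Bdd AR v
      · -- both restrictions are winnable for player 0 from v : contradiction
        exfalso
        apply hv
        obtain ⟨σL, hσL, hwinL⟩ := claimA AL
        obtain ⟨σR, hσR, hwinR⟩ := claimA AR
        obtain ⟨cL, hcL⟩ := hwinL v hBL
        rw [winningFrom_iff_W'] at hcL
        by_cases hBRs : Bdd AR u₀
        · -- the switching lemma applies
          obtain ⟨cR, hcR⟩ := hwinR u₀ hBRs
          rw [winningFrom_iff_W'] at hcR
          have hS := lemS A AL AR u₀ t₀ hstar rfl rfl rfl rfl hELne hERne hELstar hERstar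
            hσL hσR
          refine ⟨cL + cR, fun n => ?_⟩
          have h := (hS n v (cL : ℤ) (cR : ℤ)).1 hcL hcR
          omega
        · -- the right game never reaches u₀, so σR wins in the full game
          obtain ⟨cR, hcR⟩ := hwinR v hBR
          rw [winningFrom_iff_W'] at hcR
          have hσRA : Strategy0 A σR := by
            intro u hP
            have hne : u ≠ u₀ := fun h => hstar (h ▸ hP)
            exact (restrict_E_ne A hne).1 (hσR u hP)
          have hWA : W' A σR v (cR : ℤ) := by
            intro ρ hρ hcons j
            have hnever : ∀ i, ρ i ≠ u₀ := by
              intro i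
              induction i using Nat.strong_induction_on with
              | _ i ihi =>
              intro hieq
              match i, hieq with
              | 0, hieq =>
                rw [hρ.1] at hieq
                exact hBRs (hieq ▸ hBR)
              | (i+1), hieq =>
                have hpre : ∀ k, k < i + 1 → AR.E (ρ k) (ρ (k + 1)) := by
                  intro k hk
                  have hkk : ρ k ≠ u₀ := ihi k (by omega)
                  exact (restrict_E_ne A hkk).2 (hρ.2 k)
                have hπ := ext_isPlay AR hσR (ρ (i + 1))
                have hplay : IsPlay AR v (glue (i + 1) ρ (ext AR σR (ρ (i + 1)))) :=
                  glue_isPlay AR hρ.1 hpre hπ.1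
                have hcons2 : Consistent0 AR σR (glue (i + 1) ρ (ext AR σR (ρ (i + 1)))) :=
                  glue_consistent0 AR hπ.1.1 (fun k _ hP => hcons k hP) hπ.2
                have hW2 := shiftW' AR hcR hplay hcons2 (i + 1)
                have hval : glue (i + 1) ρ (ext AR σR (ρ (i + 1))) (i + 1) = ρ (i + 1) :=
                  glue_of_le hπ.1.1 le_rfl
                rw [hval, hieq] at hW2
                exact hBRs (not_bdd_of_W' AR hσR hW2)
            have hARplay : IsPlay AR v ρ :=
              ⟨hρ.1, fun i => (restrict_E_ne A (hnever i)).2 (hρ.2 i)⟩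
            exact hcR ρ hARplay hcons j
          exact not_bdd_of_W' A hσRA hWA
      · -- player 1 wins the right restriction from v; transfer
        obtain ⟨τ, hτ, hdef⟩ := IH (pmeasure AR) (by omega) AR le_rfl v hBR
        refine ⟨τ, fun u hP => restrict_E_sub A (hτ u hP), ?_⟩
        intro c ρ hρ hcons
        have hplay : IsPlay AR v ρ := by
          refine ⟨hρ.1, ?_⟩
          intro i
          by_cases hui : ρ i = u₀
          · have hP1 : ¬ AR.P0 (ρ i) := by rw [hui]; exact hstar
            rw [hcons i hP1]
            exact hτ (ρ i) hP1
          · exact (restrict_E_ne A hui).2 (hρ.2 i)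
        exact hdef c ρ hplay hcons
    · -- player 1 wins the left restriction from v; transfer
      obtain ⟨τ, hτ, hdef⟩ := IH (pmeasure AL) (by omega) AL le_rfl v hBL
      refine ⟨τ, fun u hP => restrict_E_sub A (hτ u hP), ?_⟩
      intro c ρ hρ hcons
      have hplay : IsPlay AL v ρ := by
        refine ⟨hρ.1, ?_⟩
        intro i
        by_cases hui : ρ i = u₀
        · have hP1 : ¬ AL.P0 (ρ i) := by rw [hui]; exact hstar
          rw [hcons i hP1]
          exact hτ (ρ i) hP1
        · exact (restrict_E_ne A hui).2 (hρ.2 i)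
      exact hdef c ρ hplay hcons
  · -- base case: every player-1 vertex has a unique successor
    push_neg at hex
    refine ⟨fun u => (A.total u).choose, fun u _ => (A.total u).choose_spec, ?_⟩
    intro c ρ hρ hcons
    by_contra hcon
    push_neg at hcon
    have claim : ∀ n j, (fn A n (ρ j) : ℤ) ≤ ien A (c : ℤ) ρ j := by
      intro n
      induction n with
      | zero => intro j; simpa [fn] using hcon j
      | succ n ihn =>
        intro j
        have hedge : ρ (j + 1) ∈ succs A (ρ j) := (mem_succs A).2 (hρ.2 j)
        have hj := hcon j
        have hih := ihn (j + 1)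
        rw [ien_succ] at hih
        by_cases hp : A.P0 (ρ j)
        · have h1 : fn A (n + 1) (ρ j) ≤ ((fn A n (ρ (j + 1)) : ℤ) - A.w (ρ j) (ρ (j + 1))).toNat := by
            simp only [fn, if_pos hp]
            exact Finset.inf'_le _ hedge
          have h2 : (fn A (n + 1) (ρ j) : ℤ)
              ≤ (((fn A n (ρ (j + 1)) : ℤ) - A.w (ρ j) (ρ (j + 1))).toNat : ℤ) := by
            exact_mod_cast h1
          omega
        · have hcard2 := hex (ρ j) hp
          have huniq : ∀ x ∈ succs A (ρ j), x = ρ (j + 1) :=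
            fun x hx => Finset.card_le_one.1 (by omega) x hx (ρ (j + 1)) hedge
          have h1 : fn A (n + 1) (ρ j) ≤ (ien A (c : ℤ) ρ j).toNat := by
            simp only [fn, if_neg hp]
            apply Finset.sup'_le
            intro x hx
            rw [huniq x hx]
            omega
          have h2 : (fn A (n + 1) (ρ j) : ℤ) ≤ ((ien A (c : ℤ) ρ j).toNat : ℤ) := by
            exact_mod_cast h1
          omega
    apply hv
    refine ⟨c, fun n => ?_⟩
    have h := claim n 0
    rw [ien_zero] at h
    rw [hρ.1] at h
    omega

end EGaux
/-- Memoryless determinacy of energy games: from every vertex, either player 0 has a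
memoryless winning strategy with some initial credit, or player 1 has a memoryless
strategy defeating every initial credit. -/
theorem stmt1 {V : Type} [Fintype V] [Nonempty V] (A : Arena V) (v : V) :
    (∃ σ : V → V, Strategy0 A σ ∧ ∃ c : ℕ, WinningFrom A σ v c) ∨
    (∃ τ : V → V, Strategy1 A τ ∧ ∀ c : ℕ, ∀ ρ : ℕ → V,
      IsPlay A v ρ → Consistent1 A τ ρ → ∃ j, energy A c ρ j < 0) := by
  classical
  by_cases hb : EGaux.Bdd A v
  · obtain ⟨σ, hσ, hwin⟩ := EGaux.claimA A
    obtain ⟨c, hc⟩ := hwin v hb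
    exact Or.inl ⟨σ, hσ, c, hc⟩
  · obtain ⟨τ, hτ, hdef⟩ := EGaux.lemD (EGaux.pmeasure A) A le_rfl v hb
    refine Or.inr ⟨τ, hτ, fun c ρ h1 h2 => ?_⟩
    obtain ⟨j, hj⟩ := hdef c ρ h1 h2
    exact ⟨j, by rwa [EGaux.energy_eq_ien]⟩
end
end

section
/- Every energy game arena Γ admits a least energy progress measure: there exists an energy progress measure f* for Γ such that f* ⊑ f for every energy progress measure f for Γ. -/
open scoped Classical
noncomputable section

variable {V : Type}

lemma osub_mono' {a a' : ℕ∞} (b : ℤ) (h : a ≤ a') : osub a b ≤ osub a' b := by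
  cases a' with
  | top =>
    have : osub (⊤ : ℕ∞) b = ⊤ := rfl
    rw [this]; exact le_top
  | coe n' =>
    cases a with
    | top => exact absurd h (by simp)
    | coe n =>
      have hn : (n : ℤ) ≤ (n' : ℤ) := by exact_mod_cast WithTop.coe_le_coe.mp h
      have h1 : osub (n : ℕ∞) b = (((n : ℤ) - b).toNat : ℕ∞) := rfl
      have h2 : osub (n' : ℕ∞) b = (((n' : ℤ) - b).toNat : ℕ∞) := rfl
      rw [h1, h2, Nat.cast_le]
      exact Int.toNat_le_toNat (sub_le_sub_right hn b)

/-- Every energy game arena admits a least energy progress measure. -/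
theorem stmt5 {V : Type} [Fintype V] [Nonempty V] (A : Arena V) :
    ∃ fstar : V → ℕ∞, IsEPM A fstar ∧ ∀ f : V → ℕ∞, IsEPM A f → ∀ v, fstar v ≤ f v := by
  classical
  set fstar : V → ℕ∞ := fun v => ⨅ f : {f : V → ℕ∞ // IsEPM A f}, f.1 v with hfstar
  have hle : ∀ f : V → ℕ∞, IsEPM A f → ∀ v, fstar v ≤ f v := by
    intro f hf v
    exact iInf_le (fun g : {f : V → ℕ∞ // IsEPM A f} => g.1 v) ⟨f, hf⟩
  refine ⟨fstar, ⟨?_, ?_⟩, hle⟩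
  · intro v hv
    -- choose a successor minimizing osub (fstar v') (A.w v v')
    obtain ⟨v0, hv0⟩ := A.total v
    have hne : (Finset.univ.filter (fun v' => A.E v v')).Nonempty :=
      ⟨v0, by simp [hv0]⟩
    obtain ⟨u, hu, hmin⟩ := Finset.exists_min_image
      (Finset.univ.filter (fun v' => A.E v v'))
      (fun v' => osub (fstar v') (A.w v v')) hne
    refine ⟨u, by simpa using hu, ?_⟩
    apply le_iInf
    rintro ⟨f, hf⟩
    obtain ⟨v', hE, hle'⟩ := hf.1 v hv
    calc osub (fstar u) (A.w v u)
        ≤ osub (fstar v') (A.w v v') := hmin v' (by simp [hE])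
      _ ≤ osub (f v') (A.w v v') := osub_mono' _ (hle f hf v')
      _ ≤ f v := hle'
  · intro v hv v' hE
    apply le_iInf
    rintro ⟨f, hf⟩
    calc osub (fstar v') (A.w v v')
        ≤ osub (f v') (A.w v v') := osub_mono' _ (hle f hf v')
      _ ≤ f v := hf.2 v hv v' hE
end
end

section
/- Let f* be the least energy progress measure of an energy game arena Γ. Then for every vertex v ∈ W₁ (i.e., every vertex from which player 0 has no winning memoryless strategy), f*(v) = ⊤. -/
open scoped Classical
noncomputable section

variable {V : Type}

lemma osub_coe' (a : ℕ) (b : ℤ) : osub (a : ℕ∞) b = ((((a : ℤ) - b).toNat : ℕ) : ℕ∞) := rfl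

lemma osub_top' (b : ℤ) : osub (⊤ : ℕ∞) b = ⊤ := rfl

/-- The least energy progress measure is `⊤` on every vertex outside player 0's
winning region `W₀`. -/
theorem stmt6 {V : Type} [Fintype V] [Nonempty V] (A : Arena V)
    (fstar : V → ℕ∞) (hEPM : IsEPM A fstar)
    (hleast : ∀ f : V → ℕ∞, IsEPM A f → ∀ v, fstar v ≤ f v) :
    ∀ v : V, v ∉ W0 A → fstar v = ⊤ := by
  intro v hv
  by_contra hne
  apply hv
  obtain ⟨n, hn⟩ : ∃ n : ℕ, fstar v = (n : ℕ∞) := by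
    cases h : fstar v with
    | top => exact absurd h hne
    | coe n => exact ⟨n, rfl⟩
  classical
  set σ : V → V := fun u =>
    if h : A.P0 u then Classical.choose (hEPM.1 u h) else Classical.choose (A.total u) with hσ
  refine ⟨σ, ?_, n, ?_⟩
  · intro u hu
    simp only [hσ, dif_pos hu]
    exact (Classical.choose_spec (hEPM.1 u hu)).1
  · intro ρ hplay hcons j
    suffices H : ∀ j, ∃ m : ℕ, fstar (ρ j) = (m : ℕ∞) ∧ (m : ℤ) ≤ energy A n ρ j by
      obtain ⟨m, _, hm⟩ := H j
      exact le_trans (by positivity) hm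
    intro j
    induction j with
    | zero =>
      refine ⟨n, ?_, ?_⟩
      · rw [hplay.1]; exact hn
      · simp [energy]
    | succ j ih =>
      obtain ⟨m, hm, hme⟩ := ih
      have hedge : A.E (ρ j) (ρ (j + 1)) := hplay.2 j
      have hkey : osub (fstar (ρ (j + 1))) (A.w (ρ j) (ρ (j + 1))) ≤ fstar (ρ j) := by
        by_cases hp : A.P0 (ρ j)
        · have hc := hcons j hp
          rw [hc]
          have := (Classical.choose_spec (hEPM.1 (ρ j) hp)).2
          simpa [hσ, dif_pos hp] using this
        · exact hEPM.2 (ρ j) hp _ hedge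
      cases h' : fstar (ρ (j + 1)) with
      | top =>
        rw [h', hm, osub_top'] at hkey
        exact absurd (top_le_iff.mp hkey).symm (by simp)
      | coe m' =>
        rw [h', hm] at hkey
        refine ⟨m', rfl, ?_⟩
        have h1 : ((m' : ℤ) - A.w (ρ j) (ρ (j + 1))).toNat ≤ m := by
          rw [osub_coe'] at hkey
          exact_mod_cast hkey
        have h2 : (m' : ℤ) - A.w (ρ j) (ρ (j + 1)) ≤ (m : ℤ) :=
          le_trans (Int.self_le_toNat _) (by exact_mod_cast h1)
        have he : energy A n ρ (j + 1) = energy A n ρ j + A.w (ρ j) (ρ (j + 1)) := by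
          simp [energy, Finset.sum_range_succ, add_assoc]
        rw [he]
        linarith
end
end

section
/- Let f be an energy progress measure for an energy game arena Γ and let v ∈ V with f(v) ≠ ⊤, say f(v) = n ∈ ℕ. Then player 0 has a memoryless strategy σ₀ (choosing at each u ∈ V₀ with f(u) ≠ ⊤ a successor u' with f(u) ⪰ f(u') ⊖ w(u,u')) that is winning from v with initial credit n: every play from v consistent with σ₀ has all prefix energy levels ≥ 0 for initial credit n. -/
open scoped Classical
noncomputable section

variable {V : Type}

/-- From an EPM `f` with `f v = n ≠ ⊤`, player 0 has a memoryless strategy, choosing at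
each `u ∈ V₀` with `f u ≠ ⊤` a successor `u'` with `f u ⪰ f u' ⊖ w(u,u')`, which is
winning from `v` with initial credit `n`. -/
theorem stmt8 {V : Type} [Fintype V] [Nonempty V] (A : Arena V)
    (f : V → ℕ∞) (hEPM : IsEPM A f) (v : V) (n : ℕ) (hfv : f v = (n : ℕ∞)) :
    ∃ σ : V → V, Strategy0 A σ ∧
      (∀ u, A.P0 u → f u ≠ ⊤ → osub (f (σ u)) (A.w u (σ u)) ≤ f u) ∧
      WinningFrom A σ v n := by
  classical
  choose g hg1 hg2 using hEPM.1
  set σ : V → V := fun u => if h : A.P0 u then g u h else Classical.choose (A.total u) with hσ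
  refine ⟨σ, ?_, ?_, ?_⟩
  · intro u hu
    simp only [hσ, dif_pos hu]
    exact hg1 u hu
  · intro u hu _
    simp only [hσ, dif_pos hu]
    exact hg2 u hu
  · intro ρ hplay hcons j
    have key : ∀ j, ∃ m : ℕ, f (ρ j) = (m : ℕ∞) ∧ (m : ℤ) ≤ energy A n ρ j := by
      intro j
      induction j with
      | zero =>
        refine ⟨n, ?_, ?_⟩
        · rw [hplay.1]; exact hfv
        · simp [energy]
      | succ j ih =>
        obtain ⟨m, hm, hle⟩ := ih
        have hkey : osub (f (ρ (j + 1))) (A.w (ρ j) (ρ (j + 1))) ≤ f (ρ j) := by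
          by_cases hP : A.P0 (ρ j)
          · have hc := hcons j hP
            rw [hc]
            have : σ (ρ j) = g (ρ j) hP := by simp [hσ, dif_pos hP]
            rw [this]
            exact hg2 (ρ j) hP
          · exact hEPM.2 (ρ j) hP (ρ (j + 1)) (hplay.2 j)
        rw [hm] at hkey
        obtain ⟨k, hk⟩ : ∃ k : ℕ, f (ρ (j + 1)) = (k : ℕ∞) := by
          cases hfk : f (ρ (j + 1)) with
          | top =>
            rw [hfk] at hkey
            rw [show osub ⊤ (A.w (ρ j) (ρ (j + 1))) = ⊤ from rfl] at hkey
            simp at hkey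
          | coe k => exact ⟨k, rfl⟩
        rw [hk] at hkey
        have hkey' : (((k : ℤ) - A.w (ρ j) (ρ (j + 1))).toNat : ℕ∞) ≤ (m : ℕ∞) := by
          rw [show osub ((k : ℕ∞)) (A.w (ρ j) (ρ (j + 1))) =
            ((((k : ℤ) - A.w (ρ j) (ρ (j + 1))).toNat : ℕ) : ℕ∞) from rfl] at hkey
          exact hkey
        have h1 : ((k : ℤ) - A.w (ρ j) (ρ (j + 1))).toNat ≤ m := by
          exact_mod_cast hkey'
        have h2 : (k : ℤ) - A.w (ρ j) (ρ (j + 1)) ≤ (m : ℤ) := Int.toNat_le.mp h1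
        refine ⟨k, hk, ?_⟩
        have henergy : energy A n ρ (j + 1) = energy A n ρ j + A.w (ρ j) (ρ (j + 1)) := by
          simp [energy, Finset.sum_range_succ, add_assoc]
        rw [henergy]
        linarith
    obtain ⟨m, _, hle⟩ := key j
    have : (0 : ℤ) ≤ (m : ℤ) := Int.ofNat_nonneg m
    linarith
end
end

section
/- Let G = (V,E,w) be a finite weighted graph in which every vertex has at least one outgoing edge, and let v ∈ V be a vertex such that every cycle reachable from v in G is nonnegative. Then every finite path starting at v has total weight at least −(|V|−1)·W, where W = max({0} ∪ {−w(e) : e ∈ E}). In particular the prefix sums of every infinite path from v are bounded from below. -/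
open scoped Classical
noncomputable section

variable {V : Type}

/-- In a finite total weighted graph in which every cycle reachable from `v` is
nonnegative, every finite path from `v` has total weight at least `−(|V|−1)·W`, where
`W = max({0} ∪ {−w(e) : e ∈ E})`; in particular the prefix sums of every infinite path
from `v` are bounded from below. -/
theorem stmt16 {V : Type} [Fintype V] (E : V → V → Prop) (w : V → V → ℤ)
    (htotal : ∀ v, ∃ v', E v v') (v : V)
    (hcyc : ∀ (m : ℕ) (p : ℕ → V), 1 ≤ m → p 0 = p m →
      (∀ i < m, E (p i) (p (i + 1))) →
      (∃ (k : ℕ) (q : ℕ → V), q 0 = v ∧ q k = p 0 ∧ ∀ i < k, E (q i) (q (i + 1))) →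
      0 ≤ ∑ i ∈ Finset.range m, w (p i) (p (i + 1))) :
    (∀ (n : ℕ) (p : ℕ → V), p 0 = v → (∀ i < n, E (p i) (p (i + 1))) →
      -(((Fintype.card V - 1) *
          (Finset.univ.filter (fun e : V × V => E e.1 e.2)).sup
            (fun e => (-(w e.1 e.2)).toNat) : ℕ) : ℤ) ≤
        ∑ i ∈ Finset.range n, w (p i) (p (i + 1))) ∧
    (∀ ρ : ℕ → V, ρ 0 = v → (∀ i, E (ρ i) (ρ (i + 1))) →
      ∃ B : ℤ, ∀ n, B ≤ ∑ i ∈ Finset.range n, w (ρ i) (ρ (i + 1))) := by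
  set W : ℕ := (Finset.univ.filter (fun e : V × V => E e.1 e.2)).sup
      (fun e => (-(w e.1 e.2)).toNat) with hWdef
  have hedge : ∀ a b : V, E a b → -(W : ℤ) ≤ w a b := by
    intro a b hab
    have h1 : (-(w a b)).toNat ≤ W :=
      Finset.le_sup (f := fun e : V × V => (-(w e.1 e.2)).toNat)
        (by simp [hab] : ((a, b) : V × V) ∈ Finset.univ.filter (fun e : V × V => E e.1 e.2))
    omega
  have hcard : 1 ≤ Fintype.card V := Fintype.card_pos_iff.mpr ⟨v⟩
  have main : ∀ n (p : ℕ → V), p 0 = v → (∀ i < n, E (p i) (p (i + 1))) →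
      -(((Fintype.card V - 1) * W : ℕ) : ℤ) ≤ ∑ i ∈ Finset.range n, w (p i) (p (i + 1)) := by
    intro n
    induction n using Nat.strong_induction_on with
    | _ n ih =>
      intro p hp0 hpE
      by_cases hn : n < Fintype.card V
      · -- short path: each edge ≥ -W
        have h1 : ∑ i ∈ Finset.range n, (-(W : ℤ)) ≤ ∑ i ∈ Finset.range n, w (p i) (p (i + 1)) :=
          Finset.sum_le_sum (fun i hi => hedge _ _ (hpE i (Finset.mem_range.mp hi)))
        have h2 : ∑ i ∈ Finset.range n, (-(W : ℤ)) = -((n * W : ℕ) : ℤ) := by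
          simp [Finset.sum_const, mul_comm]
        have h3 : (n * W : ℕ) ≤ (Fintype.card V - 1) * W :=
          Nat.mul_le_mul_right _ (by omega)
        have h3' : ((n * W : ℕ) : ℤ) ≤ ((Fintype.card V - 1) * W : ℕ) := by exact_mod_cast h3
        linarith [h1, h2.symm.le]
      · -- long path: cut out a cycle
        push_neg at hn
        obtain ⟨a, b, hab, hbV, heq⟩ : ∃ a b, a < b ∧ b ≤ Fintype.card V ∧ p a = p b := by
          have h := Finset.exists_ne_map_eq_of_card_lt_of_maps_to
            (s := Finset.range (Fintype.card V + 1)) (t := (Finset.univ : Finset V))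
            (by simp) (fun i _ => Finset.mem_univ (p i))
          obtain ⟨i, hi, j, hj, hij, he⟩ := h
          simp only [Finset.mem_range, Nat.lt_succ_iff] at hi hj
          rcases lt_or_gt_of_ne hij with h | h
          · exact ⟨i, j, h, hj, he⟩
          · exact ⟨j, i, h, hi, he.symm⟩
        set m := b - a with hmdef
        have hm : 1 ≤ m := by omega
        have hb : b = a + m := by omega
        have hbn : b ≤ n := le_trans hbV hn
        set n' := n - m with hn'def
        have hn'm : n = n' + m := by omega
        have han' : a ≤ n' := by omega
        set q : ℕ → V := fun i => if i < a then p i else p (i + m) with hqdef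
        have hq0 : q 0 = v := by
          by_cases h0 : 0 < a
          · simp [hqdef, h0, hp0]
          · have ha0 : a = 0 := by omega
            have : q 0 = p (0 + m) := by simp [hqdef, ha0]
            rw [this]
            have : (0 + m) = b := by omega
            rw [this, ← heq, ha0, hp0]
        have hqE : ∀ i < n', E (q i) (q (i + 1)) := by
          intro i hi
          by_cases h1 : i + 1 < a
          · have : q i = p i := by simp [hqdef, (show i < a by omega)]
            have h2 : q (i + 1) = p (i + 1) := by simp [hqdef, h1]
            rw [this, h2]; exact hpE i (by omega)
          · by_cases h2 : i < a
            · -- i + 1 = a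
              have ha : i + 1 = a := by omega
              have e1 : q i = p i := by simp [hqdef, h2]
              have e2 : q (i + 1) = p (i + 1) := by
                have : q (i + 1) = p (i + 1 + m) := by simp [hqdef, h1]
                rw [this, ha, ← hb, ← heq, ← ha]
              rw [e1, e2]; exact hpE i (by omega)
            · have e1 : q i = p (i + m) := by simp [hqdef, h2]
              have e2 : q (i + 1) = p (i + 1 + m) := by simp [hqdef, (show ¬ i + 1 < a by omega)]
              rw [e1, e2]
              have : i + 1 + m = (i + m) + 1 := by omega
              rw [this]
              exact hpE (i + m) (by omega)
        -- termwise description of the q-sum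
        have hterm : ∀ i ∈ Finset.range n', w (q i) (q (i + 1)) =
            (if i < a then w (p i) (p (i + 1)) else w (p (i + m)) (p (i + m + 1))) := by
          intro i hi
          by_cases h2 : i < a
          · by_cases h1 : i + 1 < a
            · simp [hqdef, h1, h2]
            · have ha : i + 1 = a := by omega
              have e1 : q i = p i := by simp [hqdef, h2]
              have e2 : q (i + 1) = p (i + 1) := by
                have : q (i + 1) = p (i + 1 + m) := by simp [hqdef, h1]
                rw [this, ha, ← hb, ← heq, ← ha]
              simp [e1, e2, h2]
          · have e1 : q i = p (i + m) := by simp [hqdef, h2]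
            have e2 : q (i + 1) = p (i + 1 + m) := by simp [hqdef, (show ¬ i + 1 < a by omega)]
            have e3 : i + 1 + m = i + m + 1 := by omega
            simp [e1, e2, e3, h2]
        set f : ℕ → ℤ := fun i => w (p i) (p (i + 1)) with hfdef
        have hsplit : ∑ i ∈ Finset.range n, f i =
            ∑ i ∈ Finset.range a, f i + ∑ i ∈ Finset.Ico a b, f i + ∑ i ∈ Finset.Ico b n, f i := by
          rw [Finset.range_eq_Ico, ← Finset.sum_Ico_consecutive f (Nat.zero_le b) hbn,
            ← Finset.sum_Ico_consecutive f (Nat.zero_le a) (le_of_lt hab),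
            ← Finset.range_eq_Ico]
        have hqsum : ∑ i ∈ Finset.range n', w (q i) (q (i + 1)) =
            ∑ i ∈ Finset.range a, f i + ∑ i ∈ Finset.Ico b n, f i := by
          rw [Finset.sum_congr rfl hterm]
          have hsplit2 : ∑ i ∈ Finset.range n',
              (if i < a then f i else f (i + m)) =
              ∑ i ∈ Finset.Ico 0 a, (if i < a then f i else f (i + m)) +
              ∑ i ∈ Finset.Ico a n', (if i < a then f i else f (i + m)) := by
            rw [Finset.sum_Ico_consecutive _ (Nat.zero_le a) han', ← Finset.range_eq_Ico]
          rw [show (fun i => (if i < a then w (p i) (p (i+1)) else w (p (i+m)) (p (i+m+1)))) =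
              (fun i => (if i < a then f i else f (i + m))) from rfl] at *
          rw [hsplit2]
          congr 1
          · rw [← Finset.range_eq_Ico]
            apply Finset.sum_congr rfl
            intro i hi
            simp [Finset.mem_range.mp hi]
          · rw [Finset.sum_Ico_eq_sum_range]
            rw [Finset.sum_Ico_eq_sum_range (f := f)]
            have hnb : n' - a = n - b := by omega
            rw [hnb]
            apply Finset.sum_congr rfl
            intro i hi
            have h1 : ¬ a + i < a := by omega
            simp only [h1, if_false]
            congr 1
            omega
        have hcycle : 0 ≤ ∑ i ∈ Finset.Ico a b, f i := by
          have h := hcyc m (fun j => p (a + j)) hm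
            (by simpa [← hb] using heq)
            (by intro j hj
                show E (p (a + j)) (p (a + (j + 1)))
                exact hpE (a + j) (by omega))
            ⟨a, p, hp0, rfl, fun i hi => hpE i (by omega)⟩
          have h2 : ∑ i ∈ Finset.Ico a b, f i =
              ∑ j ∈ Finset.range m, w (p (a + j)) (p (a + j + 1)) := by
            rw [Finset.sum_Ico_eq_sum_range]
          rw [h2]
          exact h
        have hih := ih n' (by omega) q hq0 hqE
        rw [hqsum] at hih
        have : ∑ i ∈ Finset.range n, f i =
            (∑ i ∈ Finset.range a, f i + ∑ i ∈ Finset.Ico b n, f i) +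
            ∑ i ∈ Finset.Ico a b, f i := by rw [hsplit]; ring
        show -(((Fintype.card V - 1) * W : ℕ) : ℤ) ≤ ∑ i ∈ Finset.range n, f i
        rw [this]
        linarith
  constructor
  · exact main
  · intro ρ h0 hE
    exact ⟨-(((Fintype.card V - 1) * W : ℕ) : ℤ), fun n => main n ρ h0 (fun i _ => hE i)⟩
end
end
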